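/- Let S be a monoid with zero, λ ≥ 1 a cardinal, and let h : B⁰_λ(S) → T be a surjective non-trivial semigroup homomorphism. Then T is isomorphic to the Brandt λ⁰-extension of the monoid (S_{α,α})h, the homomorphic image of the copy S_{α,α} = {(α,s,α) : s ∈ S∖{0_S}} ∪ {0} of S, for any α ∈ I_λ. -/

import Mathlib

attribute [local instance] Classical.propDecidable

/-- The Brandt `λ⁰`-extension of a semigroup `S` with zero, with index set `I`:
its elements are `0` (encoded `none`) and triples `(α, s, β)` with `s ≠ 0`. -/
def Brandt (I S : Type*) [Zero S] : Type _ := Option (I × {s : S // s ≠ 0} × I)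

instance brandtZero {I S : Type*} [Zero S] : Zero (Brandt I S) := ⟨none⟩

/-- Multiplication on the Brandt `λ⁰`-extension. -/
noncomputable def brandtMul {I S : Type*} [Zero S] [Mul S] :
    Brandt I S → Brandt I S → Brandt I S
  | some (α, a, β), some (γ, b, δ) =>
      if h : β = γ ∧ a.1 * b.1 ≠ 0 then some (α, ⟨a.1 * b.1, h.2⟩, δ) else none
  | _, _ => none

noncomputable instance brandtMulInst {I S : Type*} [Zero S] [Mul S] :
    Mul (Brandt I S) := ⟨brandtMul⟩

/-- The semigroup of `I × I`-matrix units. -/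
def MatrixUnits (I : Type*) := Option (I × I)

instance muZero {I : Type*} : Zero (MatrixUnits I) := ⟨none⟩

noncomputable instance muMul {I : Type*} : Mul (MatrixUnits I) :=
  ⟨fun x y => match x, y with
    | some (a, b), some (c, d) => if b = c then some (a, d) else none
    | _, _ => none⟩

/-- The subset of `Brandt I S` induced by a subset `T ⊆ S`
(the Brandt extension of `T` inside that of `S`). -/
def brandtSet {I S : Type*} [Zero S] (T : Set S) : Set (Brandt I S) :=
  {z | z = 0 ∨ ∃ (α β : I) (s : {s : S // s ≠ 0}), s.1 ∈ T ∧ z = some (α, s, β)}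

/-- The map `B⁰_{λ₁}(S) → B⁰_{λ₂}(T)` induced by `h : S → T`, an index map `φ`
and families `u`, `v` (`v` playing the role of `a ↦ u(a)⁻¹`):
`(α,s,β) ↦ (φ α, u α · h s · v β, φ β)` when the middle entry is nonzero, else `0`. -/
noncomputable def brandtHomMap {I₁ I₂ S T : Type*} [Zero S] [Zero T] [Mul T]
    (φ : I₁ → I₂) (u v : I₁ → T) (h : S → T) : Brandt I₁ S → Brandt I₂ T
  | some (a, s, b) =>
      if hh : u a * h s.1 * v b ≠ 0 then
        some (φ a, ⟨u a * h s.1 * v b, hh⟩, φ b) else none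
  | none => none

/-- The canonical copy of `S` in `Brandt I S` at index `α` (the set `S_{α,α}`). -/
noncomputable def brandtIncl {I S : Type*} [Zero S] (α : I) : S → Brandt I S :=
  fun s => if h : s = 0 then 0 else some (α, ⟨s, h⟩, α)

/-- The non-zero element `(α, s, β)` of `Brandt I S`. -/
def brandtElt {I S : Type*} [Zero S] (α : I) (s : {s : S // s ≠ 0}) (β : I) :
    Brandt I S := some (α, s, β)

section comp
variable {J : Type*} {A : Type*} [Zero A] [Mul A]

@[simp] lemma brandt_zero_mul (x : Brandt J A) : (0 : Brandt J A) * x = 0 := rfl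

@[simp] lemma brandt_mul_zero (x : Brandt J A) : x * (0 : Brandt J A) = 0 := by
  show brandtMul x none = none
  cases x <;> rfl

lemma brandt_some_mul (a b c d : J) (s t : {s : A // s ≠ 0}) :
    brandtElt a s b * brandtElt c t d =
      if h : b = c ∧ s.1 * t.1 ≠ 0 then brandtElt a ⟨s.1 * t.1, h.2⟩ d else 0 := rfl

end comp

section aux
universe u v w
variable {I : Type u} {S : Type v} {T : Type w} [MonoidWithZero S] [Mul T]

lemma one_ne_zero_of {s : S} (hs : s ≠ 0) : (1 : S) ≠ 0 :=
  fun h1 => hs (by rw [← mul_one s, h1, mul_zero])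

lemma brandt_sandwich (h1 : (1 : S) ≠ 0) (γ δ γ' δ' : I) (s : {s : S // s ≠ 0}) :
    brandtElt γ' ⟨1, h1⟩ γ * brandtElt γ s δ * brandtElt δ ⟨1, h1⟩ δ' =
      brandtElt γ' s δ' := by
  rw [brandt_some_mul, dif_pos ⟨rfl, by simpa using s.2⟩]
  rw [brandt_some_mul]
  rw [dif_pos ⟨rfl, by simpa using s.2⟩]
  simp [brandtElt, Subtype.ext_iff]
  rfl

lemma brandtIncl_zero (α : I) : brandtIncl (I := I) α (0 : S) = 0 := dif_pos rfl

lemma brandtIncl_ne {α : I} {s : S} (hs : s ≠ 0) :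
    brandtIncl (I := I) α s = brandtElt α ⟨s, hs⟩ α := dif_neg hs

lemma brandtIncl_mul (α : I) (s t : S) :
    brandtIncl (I := I) α (s * t) = brandtIncl α s * brandtIncl α t := by
  by_cases hs : s = 0
  · simp [hs, brandtIncl_zero]
  by_cases ht : t = 0
  · simp [ht, brandtIncl_zero, brandtIncl_ne hs]
  rw [brandtIncl_ne hs, brandtIncl_ne ht, brandt_some_mul]
  by_cases hst : s * t = 0
  · rw [dif_neg (by simp [hst]), brandtIncl]; exact dif_pos hst
  · rw [dif_pos ⟨rfl, hst⟩, brandtIncl_ne hst]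

variable (h : Brandt I S → T) (hmul : ∀ x y : Brandt I S, h (x * y) = h x * h y)
include hmul

lemma brandt_htrans (h1 : (1 : S) ≠ 0) {γ δ : I} (γ' δ' : I) {s : {s : S // s ≠ 0}}
    {x : Brandt I S} (H : h (brandtElt γ s δ) = h x) :
    h (brandtElt γ' s δ') =
      h (brandtElt γ' ⟨1, h1⟩ γ * x * brandtElt δ ⟨1, h1⟩ δ') := by
  rw [hmul, hmul, ← H, ← hmul, ← hmul, brandt_sandwich]

lemma brandt_hzero (h1 : (1 : S) ≠ 0) {γ δ : I} (γ' δ' : I) {s : {s : S // s ≠ 0}}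
    (H : h (brandtElt γ s δ) = h 0) :
    h (brandtElt γ' s δ') = h 0 := by
  rw [brandt_htrans h hmul h1 γ' δ' H]; simp

lemma brandt_hcongr (h1 : (1 : S) ≠ 0) {γ δ : I} (γ' δ' : I) {s t : {s : S // s ≠ 0}}
    (H : h (brandtElt γ s δ) = h (brandtElt γ t δ)) :
    h (brandtElt γ' s δ') = h (brandtElt γ' t δ') := by
  rw [brandt_htrans h hmul h1 γ' δ' H, brandt_sandwich]

lemma brandt_hindex (h1 : (1 : S) ≠ 0) {γ δ γ' δ' : I} {s t : {s : S // s ≠ 0}}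
    (H : h (brandtElt γ s δ) = h (brandtElt γ' t δ')) (hnz : h (brandtElt γ s δ) ≠ h 0) :
    γ = γ' ∧ δ = δ' := by
  constructor
  · by_contra hne
    apply hnz
    rw [brandt_htrans h hmul h1 γ δ H, brandt_some_mul, dif_neg (fun c => hne c.1)]
    simp
  · by_contra hne
    apply hnz
    rw [brandt_htrans h hmul h1 γ δ H, brandt_some_mul]
    by_cases hc : γ = γ' ∧ (1 : S) * t.1 ≠ 0
    · rw [dif_pos hc, brandt_some_mul, dif_neg (fun c => hne c.1.symm)]
    · rw [dif_neg hc]; simp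

end aux

section main
set_option linter.unusedSectionVars false
universe u v w
variable {I : Type u} {S : Type v} {T : Type w} [MonoidWithZero S] [Mul T]
variable (h : Brandt I S → T) (α : I)

/-- The image of the copy of `S` at index `α`. -/
def Mset : Set T := Set.range fun s : S => h (brandtIncl α s)

noncomputable instance : Zero ↥(Mset h α) := ⟨⟨h (brandtIncl α 0), ⟨0, rfl⟩⟩⟩

noncomputable instance : Mul ↥(Mset h α) :=
  ⟨fun a b => if hc : a.1 * b.1 ∈ Mset h α then ⟨a.1 * b.1, hc⟩ else 0⟩

lemma Mset_zero_val : (0 : ↥(Mset h α)).1 = h 0 :=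
  congrArg h (brandtIncl_zero α)

variable {h} in
lemma Mset_mul_mem (hmul : ∀ x y : Brandt I S, h (x * y) = h x * h y)
    (a b : ↥(Mset h α)) : a.1 * b.1 ∈ Mset h α := by
  obtain ⟨s, hs⟩ := a.2
  obtain ⟨t, ht⟩ := b.2
  refine ⟨s * t, ?_⟩
  dsimp only at hs ht ⊢
  rw [brandtIncl_mul, hmul, hs, ht]

variable {h} in
lemma Mset_mul_def (hmul : ∀ x y : Brandt I S, h (x * y) = h x * h y)
    (a b : ↥(Mset h α)) : a * b = ⟨a.1 * b.1, Mset_mul_mem α hmul a b⟩ :=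
  dif_pos (Mset_mul_mem α hmul a b)

noncomputable def mrep (m : ↥(Mset h α)) : S :=
  (show ∃ s : S, h (brandtIncl α s) = m.1 from m.2).choose

lemma mrep_spec (m : ↥(Mset h α)) : h (brandtIncl α (mrep h α m)) = m.1 :=
  (show ∃ s : S, h (brandtIncl α s) = m.1 from m.2).choose_spec

lemma mval_ne (m : {x : ↥(Mset h α) // x ≠ 0}) : m.1.1 ≠ h 0 :=
  fun he => m.2 (Subtype.ext (he.trans (congrArg h (brandtIncl_zero α)).symm))

lemma mrep_ne (m : {x : ↥(Mset h α) // x ≠ 0}) : mrep h α m.1 ≠ 0 :=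
  fun h0 => mval_ne h α m (by rw [← mrep_spec h α m.1, h0, brandtIncl_zero])

/-- The inverse of the isomorphism: `Brandt I M → T`. -/
noncomputable def fmap : Brandt I ↥(Mset h α) → T :=
  fun z => match z with
  | none => h 0
  | some (γ, m, δ) => h (brandtElt γ ⟨mrep h α m.1, mrep_ne h α m⟩ δ)

lemma fmap_none : fmap h α (0 : Brandt I ↥(Mset h α)) = h 0 := rfl

lemma fmap_some (γ δ : I) (m : {x : ↥(Mset h α) // x ≠ 0}) :
    fmap h α (some (γ, m, δ)) = h (brandtElt γ ⟨mrep h α m.1, mrep_ne h α m⟩ δ) := rfl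

lemma mvalue (m : {x : ↥(Mset h α) // x ≠ 0}) :
    h (brandtElt α ⟨mrep h α m.1, mrep_ne h α m⟩ α) = m.1.1 := by
  have := mrep_spec h α m.1
  rw [brandtIncl_ne (mrep_ne h α m)] at this
  exact this

variable {h} in
lemma fmap_eval (hmul : ∀ x y : Brandt I S, h (x * y) = h x * h y)
    (γ δ : I) (m : {x : ↥(Mset h α) // x ≠ 0}) {s : S} (hs : s ≠ 0)
    (hv : h (brandtIncl α s) = m.1.1) :
    fmap h α (some (γ, m, δ)) = h (brandtElt γ ⟨s, hs⟩ δ) := by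
  rw [fmap_some]
  refine brandt_hcongr h hmul (one_ne_zero_of hs) (γ := α) (δ := α) γ δ ?_
  have h2 := hv
  rw [brandtIncl_ne hs] at h2
  rw [mvalue h α m, ← h2]

variable {h} in
lemma fmap_inj (hmul : ∀ x y : Brandt I S, h (x * y) = h x * h y) :
    Function.Injective (fmap h α) := by
  intro z w hzw
  cases z with
  | none =>
    cases w with
    | none => rfl
    | some p =>
      obtain ⟨γ, m, δ⟩ := p
      rw [fmap_some] at hzw
      exact absurd
        ((mvalue h α m).symm.trans
          (brandt_hzero h hmul (one_ne_zero_of (mrep_ne h α m)) α α hzw.symm))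
        (mval_ne h α m)
  | some p =>
    obtain ⟨γ, m, δ⟩ := p
    cases w with
    | none =>
      rw [fmap_some] at hzw
      exact absurd
        ((mvalue h α m).symm.trans
          (brandt_hzero h hmul (one_ne_zero_of (mrep_ne h α m)) α α hzw))
        (mval_ne h α m)
    | some q =>
      obtain ⟨γ', m', δ'⟩ := q
      rw [fmap_some, fmap_some] at hzw
      have h1 : (1 : S) ≠ 0 := one_ne_zero_of (mrep_ne h α m)
      have hnz : h (brandtElt γ ⟨mrep h α m.1, mrep_ne h α m⟩ δ) ≠ h 0 := by
        intro H
        exact mval_ne h α m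
          ((mvalue h α m).symm.trans (brandt_hzero h hmul h1 α α H))
      obtain ⟨rfl, rfl⟩ := brandt_hindex h hmul h1 hzw hnz
      have hval : m.1.1 = m'.1.1 := by
        rw [← mvalue h α m, ← mvalue h α m']
        exact brandt_hcongr h hmul h1 α α hzw
      rw [Subtype.ext (Subtype.ext hval : m.1 = m'.1)]

variable {h} in
lemma fmap_surj (hmul : ∀ x y : Brandt I S, h (x * y) = h x * h y)
    (hsurj : Function.Surjective h) :
    Function.Surjective (fmap h α) := by
  intro t
  obtain ⟨x, rfl⟩ := hsurj t
  cases x with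
  | none => exact ⟨none, rfl⟩
  | some p =>
    obtain ⟨γ, s, δ⟩ := p
    have hmem : h (brandtIncl α s.1) ∈ Mset h α := ⟨s.1, rfl⟩
    by_cases hm : (⟨h (brandtIncl α s.1), hmem⟩ : ↥(Mset h α)) = 0
    · refine ⟨none, ?_⟩
      have h2 : h (brandtIncl α s.1) = h 0 := by
        have h3 := congrArg Subtype.val hm
        rw [Mset_zero_val] at h3
        exact h3
      have hv : h (brandtElt α s α) = h 0 := brandtIncl_ne s.2 ▸ h2
      exact (brandt_hzero h hmul (one_ne_zero_of s.2) γ δ hv).symm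
    · exact ⟨some (γ, ⟨⟨h (brandtIncl α s.1), hmem⟩, hm⟩, δ),
        fmap_eval α hmul γ δ ⟨⟨h (brandtIncl α s.1), hmem⟩, hm⟩ s.2 rfl⟩

end main

section fmul
universe u v w
set_option linter.unusedSectionVars false
variable {I : Type u} {S : Type v} {T : Type w} [MonoidWithZero S] [Mul T]
variable {h : Brandt I S → T} (α : I)

lemma fmap_mul (hmul : ∀ x y : Brandt I S, h (x * y) = h x * h y)
    (z w : Brandt I ↥(Mset h α)) :
    fmap h α (z * w) = fmap h α z * fmap h α w := by
  cases z with
  | none =>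
    cases w with
    | none =>
      show h 0 = h 0 * h 0
      rw [← hmul, brandt_zero_mul]
    | some q =>
      obtain ⟨γ', m', δ'⟩ := q
      show h 0 = h 0 * h (brandtElt γ' ⟨mrep h α m'.1, mrep_ne h α m'⟩ δ')
      rw [← hmul, brandt_zero_mul]
  | some p =>
    obtain ⟨γ, m, δ⟩ := p
    cases w with
    | none =>
      show h 0 = h (brandtElt γ ⟨mrep h α m.1, mrep_ne h α m⟩ δ) * h 0
      rw [← hmul, brandt_mul_zero]
    | some q =>
      obtain ⟨γ', m', δ'⟩ := q
      show fmap h α (brandtElt γ m δ * brandtElt γ' m' δ') = _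
      rw [fmap_some, fmap_some, ← hmul, brandt_some_mul]
      by_cases hd : δ = γ'
      · subst hd
        have h1 : (1 : S) ≠ 0 := one_ne_zero_of (mrep_ne h α m)
        by_cases hmm : m.1 * m'.1 = 0
        · rw [brandt_some_mul, dif_neg (fun c => c.2 hmm), fmap_none]
          by_cases hs0 : mrep h α m.1 * mrep h α m'.1 = 0
          · rw [dif_neg (fun c => c.2 hs0)]
          · rw [dif_pos ⟨rfl, hs0⟩]
            have key : h (brandtElt α ⟨mrep h α m.1 * mrep h α m'.1, hs0⟩ α) = h 0 := by
              have e1 : brandtElt α ⟨mrep h α m.1, mrep_ne h α m⟩ α *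
                  brandtElt α ⟨mrep h α m'.1, mrep_ne h α m'⟩ α =
                  brandtElt α ⟨mrep h α m.1 * mrep h α m'.1, hs0⟩ α := by
                rw [brandt_some_mul, dif_pos ⟨rfl, hs0⟩]
              calc h (brandtElt α ⟨mrep h α m.1 * mrep h α m'.1, hs0⟩ α)
                  = m.1.1 * m'.1.1 := by
                    rw [← e1, hmul, mvalue h α m, mvalue h α m']
                _ = (m.1 * m'.1).1 := by rw [Mset_mul_def α hmul]
                _ = (0 : ↥(Mset h α)).1 := by rw [hmm]
                _ = h 0 := Mset_zero_val h α
            exact (brandt_hzero h hmul h1 γ δ' key).symm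
        · rw [brandt_some_mul, dif_pos ⟨rfl, hmm⟩]
          by_cases hs0 : mrep h α m.1 * mrep h α m'.1 = 0
          · exfalso
            apply hmm
            refine Subtype.ext ?_
            calc (m.1 * m'.1).1 = m.1.1 * m'.1.1 := by rw [Mset_mul_def α hmul]
              _ = h (brandtElt α ⟨mrep h α m.1, mrep_ne h α m⟩ α *
                    brandtElt α ⟨mrep h α m'.1, mrep_ne h α m'⟩ α) := by
                    rw [hmul, mvalue h α m, mvalue h α m']
              _ = h 0 := by rw [brandt_some_mul, dif_neg (fun c => c.2 hs0)]
              _ = (0 : ↥(Mset h α)).1 := (Mset_zero_val h α).symm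
          · have hv : h (brandtIncl α (mrep h α m.1 * mrep h α m'.1)) = (m.1 * m'.1).1 := by
              rw [brandtIncl_mul, hmul, mrep_spec h α m.1, mrep_spec h α m'.1, Mset_mul_def α hmul]
            rw [dif_pos ⟨rfl, hs0⟩]
            exact fmap_eval α hmul γ δ' ⟨m.1 * m'.1, hmm⟩ hs0 hv
      · rw [brandt_some_mul, dif_neg (fun c => hd c.1), fmap_none,
          dif_neg (fun c => hd c.1)]

end fmul

/-- A surjective non-trivial homomorphic image `T` of `B⁰_λ(S)` is
isomorphic to the Brandt `λ⁰`-extension of the homomorphic image `M` of the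
copy `S_{α,α}` of `S`, for any `α`. -/
theorem brandt_image.{u, v, w} {I : Type u} {S : Type v} {T : Type w}
    [MonoidWithZero S] [Mul T] [Nonempty I]
    (h : Brandt I S → T) (hmul : ∀ x y, h (x * y) = h x * h y)
    (hsurj : Function.Surjective h) (hnt : ∃ x y, h x ≠ h y) (α : I) :
    ∃ (M : Type w) (_ : Zero M) (_ : Mul M) (g : S → M) (e : T ≃ Brandt I M),
      Function.Surjective g ∧
      (∀ s t : S, g (s * t) = g s * g t) ∧
      g 0 = 0 ∧
      (∀ x y : T, e (x * y) = e x * e y) ∧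
      (∀ s : {s : S // s ≠ 0},
        e (h (brandtElt α s α)) =
          if hg : g s.1 ≠ 0 then brandtElt α ⟨g s.1, hg⟩ α else 0) := by
  have hbij : Function.Bijective (fmap h α) :=
    ⟨fmap_inj α hmul, fmap_surj α hmul hsurj⟩
  refine ⟨↥(Mset h α), inferInstance, inferInstance,
    fun s => ⟨h (brandtIncl α s), ⟨s, rfl⟩⟩,
    (Equiv.ofBijective (fmap h α) hbij).symm, ?_, ?_, ?_, ?_, ?_⟩
  · intro m
    exact ⟨mrep h α m, Subtype.ext (mrep_spec h α m)⟩
  · intro s t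
    refine Subtype.ext ?_
    rw [Mset_mul_def α hmul]
    show h (brandtIncl α (s * t)) = h (brandtIncl α s) * h (brandtIncl α t)
    rw [brandtIncl_mul, hmul]
  · rfl
  · intro x y
    apply (Equiv.ofBijective (fmap h α) hbij).injective
    rw [Equiv.apply_symm_apply]
    show x * y = fmap h α ((Equiv.ofBijective (fmap h α) hbij).symm x *
      (Equiv.ofBijective (fmap h α) hbij).symm y)
    rw [fmap_mul α hmul]
    show x * y = Equiv.ofBijective (fmap h α) hbij
        ((Equiv.ofBijective (fmap h α) hbij).symm x) *
      Equiv.ofBijective (fmap h α) hbij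
        ((Equiv.ofBijective (fmap h α) hbij).symm y)
    rw [Equiv.apply_symm_apply, Equiv.apply_symm_apply]
  · intro s
    by_cases hg : (⟨h (brandtIncl α s.1), ⟨s.1, rfl⟩⟩ : ↥(Mset h α)) ≠ 0
    · rw [dif_pos hg, Equiv.symm_apply_eq]
      exact (fmap_eval α hmul α α ⟨⟨h (brandtIncl α s.1), ⟨s.1, rfl⟩⟩, hg⟩ s.2 rfl).symm
    · rw [dif_neg hg, Equiv.symm_apply_eq]
      push_neg at hg
      show h (brandtElt α s α) = fmap h α (0 : Brandt I ↥(Mset h α))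
      rw [fmap_none]
      have h3 := congrArg Subtype.val hg
      rw [Mset_zero_val] at h3
      exact brandtIncl_ne s.2 ▸ h3
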